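/- Let $A$ be a commutative ring and $a_1,\ldots,a_r \in A$ elements not generating the unit ideal. If every permutation of the sequence $(a_1,\ldots,a_r)$ is a regular sequence, then every subsequence of $(a_1,\ldots,a_r)$ is a regular sequence. -/

import Mathlib

/-- If every permutation of `as` is a regular sequence (and `as` does not
generate the unit ideal), then every subsequence (sublist) of `as` is a regular sequence. -/
theorem stmt_0 {A : Type*} [CommRing A] (as : List A)
    (hunit : Ideal.span {a | a ∈ as} ≠ ⊤)
    (hperm : ∀ bs : List A, bs.Perm as → RingTheory.Sequence.IsRegular A bs) :
    ∀ cs : List A, cs.Sublist as → RingTheory.Sequence.IsRegular A cs := by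
  classical
  intro cs hsub
  -- find complement ds with cs ++ ds ~ as
  have hle : (cs : Multiset A) ≤ (as : Multiset A) := hsub.subperm
  obtain ⟨ds, hds⟩ := Quotient.exists_rep ((as : Multiset A) - (cs : Multiset A))
  have hperm' : (cs ++ ds).Perm as := by
    have hds' : (ds : Multiset A) = (as : Multiset A) - (cs : Multiset A) := hds
    rw [← Multiset.coe_eq_coe, ← Multiset.coe_add, hds', add_tsub_cancel_of_le hle]
  have hreg := hperm _ hperm'
  constructor
  · exact ((RingTheory.Sequence.isWeaklyRegular_append_iff A cs ds).mp
      hreg.toIsWeaklyRegular).1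
  · intro h
    apply hunit
    have h1 : Ideal.ofList cs • (⊤ : Submodule A A) ≤ Ideal.ofList cs := by
      rw [smul_eq_mul]
      exact Ideal.mul_le_left
    have h2 : Ideal.ofList cs ≤ Ideal.span {a | a ∈ as} := by
      apply Ideal.span_le.mpr
      intro x hx
      exact Ideal.subset_span (hsub.subset hx)
    exact top_le_iff.mp (h.le.trans (h1.trans h2))
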